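/- Let p(x) = Σ_{i=0}^d x^{d−i}(−1)^i a^p_i be a monic polynomial of degree d with moments (m^p_n)_{n≥1}. Then for every n with 1 ≤ n ≤ d, a^p_n = (1/n!) · Σ_{π ∈ P(n)} d^{|π|} μ(0_n, π) m^p_π. -/

import Mathlib

open Finset Polynomial
open scoped Classical

/-- The set `P(n)` of set partitions of `[n] = {1, …, n}` (as partitions of `Fin n`),
partially ordered by reverse refinement, with minimum `⊥ = 0_n` (all singletons) and
maximum `⊤ = 1_n` (one block). -/
abbrev SetPartition (n : ℕ) : Type := Finpartition (Finset.univ : Finset (Fin n))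

/-- The Möbius function `μ(0_n, π) = (−1)^{n−|π|} ∏_{V ∈ π} (|V|−1)!` of the partition
lattice `P(n)`, evaluated at the bottom element and a partition `π`. -/
noncomputable def mu0 (n : ℕ) (π : SetPartition n) : ℂ :=
  (-1 : ℂ) ^ (n - π.parts.card) * ∏ V ∈ π.parts, (Nat.factorial (V.card - 1) : ℂ)

/-- The coefficients `a^p_i` of a degree-`d` polynomial written as
`p(x) = Σ_{i=0}^d x^{d-i} (−1)^i a^p_i`, with the convention `a^p_i = 0` for `i > d`. -/
noncomputable def coeffA (d : ℕ) (p : Polynomial ℂ) (i : ℕ) : ℂ :=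
  if i ≤ d then (-1 : ℂ) ^ i * p.coeff (d - i) else 0

/-- The `d`-finite free cumulants associated to a coefficient sequence `a`:
`κ_n = ((−d)^n/(d·(n−1)!)) · Σ_{π ∈ P(n)} (−1)^{|π|} N!_π a_π (|π|−1)! / (d)_π`. -/
noncomputable def finCumulant (d : ℕ) (a : ℕ → ℂ) (k : ℕ) : ℂ :=
  (-(d : ℂ)) ^ k / ((d : ℂ) * (Nat.factorial (k - 1) : ℂ)) *
    ∑ π : SetPartition k,
      ((-1 : ℂ) ^ π.parts.card * (∏ V ∈ π.parts, (Nat.factorial V.card : ℂ)) *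
          (∏ V ∈ π.parts, a V.card) * (Nat.factorial (π.parts.card - 1) : ℂ)) /
        (∏ V ∈ π.parts, (Nat.descFactorial d V.card : ℂ))

/-- The `n`-th moment `m^p_n = (1/d) Σ_{i=1}^d r_i^n` of a monic degree-`d`
polynomial with roots `r 0, …, r (d-1)` counted with multiplicity. -/
noncomputable def momentOf (d : ℕ) (r : Fin d → ℂ) (k : ℕ) : ℂ :=
  (∑ i, r i ^ k) / (d : ℂ)

namespace CMF
variable {α β : Type*} [DecidableEq α] [DecidableEq β]

noncomputable def muW {s : Finset α} (π : Finpartition s) : ℂ :=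
  (-1 : ℂ) ^ (s.card - π.parts.card) * ∏ V ∈ π.parts, (Nat.factorial (V.card - 1) : ℂ)

def Mono (g : α → β) {s : Finset α} (π : Finpartition s) : Prop :=
  ∀ V ∈ π.parts, ∀ x ∈ V, ∀ y ∈ V, g x = g y

lemma carrier_eq {s : Finset α} {a : α} (ha : a ∈ s) (π : Finpartition s) :
    s \ π.part a = (s.erase a) \ ((π.part a).erase a) := by
  have haB : a ∈ π.part a := π.mem_part ha
  ext x
  simp only [mem_sdiff, mem_erase]
  by_cases hxa : x = a <;> simp [hxa, haB] <;> tauto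

noncomputable def glue (a : α) {s : Finset α} (ha : a ∈ s) (t : Finset α) (ht : t ⊆ s.erase a)
    (π' : Finpartition (s.erase a \ t)) : Finpartition s :=
  π'.extend (b := insert a t)
    (by simp [Finset.bot_eq_empty])
    (Finset.disjoint_insert_right.2 ⟨by simp, Finset.sdiff_disjoint⟩)
    (by
      ext x
      simp only [Finset.sup_eq_union, mem_union, mem_sdiff, mem_insert, mem_erase]
      constructor
      · rintro (⟨⟨_, h⟩, _⟩ | rfl | h)
        · exact h
        · exact ha
        · exact (mem_erase.1 (ht h)).2
      · intro hx
        by_cases hxa : x = a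
        · exact Or.inr (Or.inl hxa)
        · by_cases hxt : x ∈ t
          · exact Or.inr (Or.inr hxt)
          · exact Or.inl ⟨⟨hxa, hx⟩, hxt⟩)

lemma glue_parts (a : α) {s : Finset α} (ha : a ∈ s) (t : Finset α) (ht : t ⊆ s.erase a)
    (π' : Finpartition (s.erase a \ t)) :
    (glue a ha t ht π').parts = insert (insert a t) π'.parts := rfl

noncomputable def decomp (a : α) {s : Finset α} (ha : a ∈ s) (π : Finpartition s) :
    Σ t : Finset α, Finpartition (s.erase a \ t) :=
  ⟨(π.part a).erase a, (π.avoid (π.part a)).copy (carrier_eq ha π)⟩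

lemma avoid_parts_of_mem {s : Finset α} (π : Finpartition s) {B : Finset α} (hB : B ∈ π.parts) :
    (π.avoid B).parts = π.parts.erase B := by
  ext V
  rw [Finpartition.mem_avoid, mem_erase]
  constructor
  · rintro ⟨D, hD, hDB, rfl⟩
    have hDB' : D ≠ B := fun h => hDB (h ▸ le_refl _)
    have hd : Disjoint D B := π.disjoint hD hB hDB'
    rw [(Finset.sdiff_eq_self_iff_disjoint).2 hd]
    exact ⟨hDB', hD⟩
  · rintro ⟨hVB, hVp⟩
    have hd : Disjoint V B := π.disjoint hVp hB hVB
    exact ⟨V, hVp, fun hle => (π.ne_bot hVp) (hd.eq_bot_of_le hle),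
      (Finset.sdiff_eq_self_iff_disjoint).2 hd⟩

lemma sigma_ext' {u : Finset α} {x y : Σ t : Finset α, Finpartition (u \ t)}
    (h1 : x.1 = y.1) (h2 : x.2.parts = y.2.parts) : x = y := by
  obtain ⟨t, p⟩ := x
  obtain ⟨t', q⟩ := y
  dsimp at h1
  subst h1
  dsimp at h2
  exact congrArg _ (Finpartition.ext h2)

lemma decomp_fst (a : α) {s : Finset α} (ha : a ∈ s) (t : Finset α) (ht : t ⊆ s.erase a)
    (π' : Finpartition (s.erase a \ t)) :
    (decomp a ha (glue a ha t ht π')).1 = t := by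
  have hat : a ∉ t := fun h => (Finset.notMem_erase a s) (ht h)
  have hpart : (glue a ha t ht π').part a = insert a t :=
    Finpartition.part_eq_of_mem _ (by rw [glue_parts]; exact mem_insert_self _ _)
      (mem_insert_self a t)
  show ((glue a ha t ht π').part a).erase a = t
  rw [hpart, Finset.erase_insert hat]

lemma decomp_glue (a : α) {s : Finset α} (ha : a ∈ s) (t : Finset α) (ht : t ⊆ s.erase a)
    (π' : Finpartition (s.erase a \ t)) :
    decomp a ha (glue a ha t ht π') = ⟨t, π'⟩ := by
  have h1 := decomp_fst a ha t ht π'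
  have hpart : (glue a ha t ht π').part a = insert a t :=
    Finpartition.part_eq_of_mem _ (by rw [glue_parts]; exact mem_insert_self _ _)
      (mem_insert_self a t)
  have hnotmem : insert a t ∉ π'.parts := by
    intro h
    have := π'.le h (mem_insert_self a t)
    simp [mem_sdiff] at this
  have h2 : (decomp a ha (glue a ha t ht π')).2.parts = π'.parts := by
    show ((glue a ha t ht π').avoid ((glue a ha t ht π').part a)).parts = π'.parts
    rw [hpart, avoid_parts_of_mem _ (by rw [glue_parts]; exact mem_insert_self _ _),
      glue_parts, Finset.erase_insert hnotmem]

  exact sigma_ext' h1 h2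

lemma glue_decomp (a : α) {s : Finset α} (ha : a ∈ s) (π : Finpartition s)
    (ht : (decomp a ha π).1 ⊆ s.erase a) :
    glue a ha (decomp a ha π).1 ht (decomp a ha π).2 = π := by
  have haB : a ∈ π.part a := π.mem_part ha
  have hBmem : π.part a ∈ π.parts := π.part_mem.2 ha
  apply Finpartition.ext
  rw [glue_parts]
  show insert (insert a ((π.part a).erase a)) ((π.avoid (π.part a)).parts) = π.parts
  rw [Finset.insert_erase haB, avoid_parts_of_mem _ hBmem, Finset.insert_erase hBmem]


lemma insert_not_mem_parts (a : α) {s : Finset α} (t : Finset α)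
    (π' : Finpartition (s.erase a \ t)) : insert a t ∉ π'.parts := by
  intro h
  have := π'.le h (mem_insert_self a t)
  simp [mem_sdiff] at this

lemma weight_glue (g : α → β) (a : α) {s : Finset α} (ha : a ∈ s) (t : Finset α)
    (ht : t ⊆ s.erase a) (π' : Finpartition (s.erase a \ t)) :
    (if Mono g (glue a ha t ht π') then muW (glue a ha t ht π') else 0) =
      (if ∀ x ∈ t, g x = g a then ((-1 : ℂ) ^ t.card * (Nat.factorial t.card : ℂ)) else 0) *
      (if Mono g π' then muW π' else 0) := by
  have hat : a ∉ t := fun h => (Finset.notMem_erase a s) (ht h)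
  have hnm := insert_not_mem_parts a t π'
  have hmono : Mono g (glue a ha t ht π') ↔ ((∀ x ∈ t, g x = g a) ∧ Mono g π') := by
    unfold Mono
    rw [glue_parts]
    constructor
    · intro h
      refine ⟨fun x hx => h _ (mem_insert_self _ _) x (mem_insert_of_mem hx) a
        (mem_insert_self a t), fun V hV => h V (mem_insert_of_mem hV)⟩
    · rintro ⟨h1, h2⟩ V hV x hx y hy
      rcases mem_insert.1 hV with rfl | hV'
      · have hx' : g x = g a := by
          rcases mem_insert.1 hx with rfl | h
          · rfl
          · exact h1 _ h
        have hy' : g y = g a := by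
          rcases mem_insert.1 hy with rfl | h
          · rfl
          · exact h1 _ h
        rw [hx', hy']
      · exact h2 V hV' x hx y hy
  rw [hmono]
  by_cases h1 : (∀ x ∈ t, g x = g a) <;> by_cases h2 : Mono g π' <;> simp [h1, h2]
  unfold muW
  rw [glue_parts, Finset.prod_insert hnm, Finset.card_insert_of_notMem hnm,
    Finset.card_insert_of_notMem hat]
  have e1 : (t.card + 1) - 1 = t.card := rfl
  rw [e1]
  have h3 : π'.parts.card ≤ (s.erase a \ t).card := π'.card_parts_le_card
  have h4 : (s.erase a \ t).card = s.card - 1 - t.card := by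
    rw [Finset.card_sdiff_of_subset ht, Finset.card_erase_of_mem ha]
  have h5 : t.card ≤ s.card - 1 := by
    have := Finset.card_le_card ht
    rwa [Finset.card_erase_of_mem ha] at this
  have h6 : 1 ≤ s.card := Finset.card_pos.2 ⟨a, ha⟩
  have e2 : s.card - (π'.parts.card + 1) = t.card + ((s.erase a \ t).card - π'.parts.card) := by
    omega
  rw [e2, pow_add]
  ring

theorem key (g : α → β) (s : Finset α) :
    ∑ π : Finpartition s, (if Mono g π then muW π else 0) =
      if Set.InjOn g ↑s then 1 else 0 := by
  induction s using Finset.strongInduction with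
  | _ s ih =>
  rcases s.eq_empty_or_nonempty with rfl | ⟨a, ha⟩
  · have h0 : ∀ π : Finpartition (∅ : Finset α), π.parts = ∅ := fun π =>
      Finpartition.parts_eq_empty_iff.mpr rfl
    have hone : ∀ π : Finpartition (∅ : Finset α), (if Mono g π then muW π else 0) = 1 := by
      intro π
      simp [Mono, muW, h0 π]
    rw [Finset.sum_congr rfl (fun π _ => hone π)]
    have hcard : Fintype.card (Finpartition (∅ : Finset α)) = 1 := by
      rw [Fintype.card_eq_one_iff]
      exact ⟨⊥, fun π => Finpartition.ext (by rw [h0 π, h0 ⊥])⟩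
    simp [hcard]
  · -- main inductive step
    have key2 : ∑ π : Finpartition s, (if Mono g π then muW π else 0)
        = ∑ t ∈ (s.erase a).powerset,
            (if ∀ x ∈ t, g x = g a then ((-1 : ℂ) ^ t.card * (Nat.factorial t.card : ℂ))
              else 0) *
            ∑ π' : Finpartition (s.erase a \ t), (if Mono g π' then muW π' else 0) := by
      rw [eq_comm]
      simp_rw [Finset.mul_sum]
      rw [Finset.sum_sigma']
      refine Finset.sum_bij'
        (fun x hx => glue a ha x.1 (Finset.mem_powerset.1 (Finset.mem_sigma.1 hx).1) x.2)
        (fun π _ => decomp a ha π) (fun _ _ => Finset.mem_univ _) ?_ ?_ ?_ ?_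
      · intro π _
        rw [Finset.mem_sigma]
        refine ⟨Finset.mem_powerset.2 ?_, Finset.mem_univ _⟩
        exact Finset.erase_subset_erase a (π.le (π.part_mem.2 ha))
      · rintro ⟨t, π'⟩ hx
        exact decomp_glue a ha t _ π'
      · intro π _
        exact glue_decomp a ha π _
      · rintro ⟨t, π'⟩ hx
        exact (weight_glue g a ha t (Finset.mem_powerset.1 (Finset.mem_sigma.1 hx).1) π').symm
    rw [key2]
    have hIH : ∀ t ∈ (s.erase a).powerset,
        (∑ π' : Finpartition (s.erase a \ t), (if Mono g π' then muW π' else 0))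
          = if Set.InjOn g ↑(s.erase a \ t) then 1 else 0 := by
      intro t _
      refine ih _ ((Finset.ssubset_iff_of_subset ?_).2 ⟨a, ha, ?_⟩)
      · exact (Finset.sdiff_subset).trans (Finset.erase_subset a s)
      · simp
    rw [Finset.sum_congr rfl (fun t htp => by rw [hIH t htp])]
    set F := (s.erase a).filter (fun x => g x = g a) with hF
    have hFsub : F ⊆ s.erase a := Finset.filter_subset _ _
    have hvanish : ∀ t ∈ (s.erase a).powerset, t ∉ F.powerset →
        (if ∀ x ∈ t, g x = g a then ((-1 : ℂ) ^ t.card * (Nat.factorial t.card : ℂ)) else 0) *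
          (if Set.InjOn g ↑(s.erase a \ t) then 1 else 0) = 0 := by
      intro t ht1 ht2
      have : ¬ ∀ x ∈ t, g x = g a := by
        intro hall
        refine ht2 (Finset.mem_powerset.2 fun x hx => ?_)
        exact Finset.mem_filter.2 ⟨Finset.mem_powerset.1 ht1 hx, hall x hx⟩
      rw [if_neg this, zero_mul]
    rw [← Finset.sum_subset (Finset.powerset_mono.2 hFsub) hvanish]
    by_cases hinj : Set.InjOn g ↑s
    · have hFempty : F = ∅ := by
        rw [Finset.eq_empty_iff_forall_notMem]
        intro x hx
        rw [hF, Finset.mem_filter, Finset.mem_erase] at hx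
        exact hx.1.1 (hinj (Finset.mem_coe.2 hx.1.2) (Finset.mem_coe.2 ha) hx.2)
      rw [hFempty, if_pos hinj]
      rw [Finset.powerset_empty, Finset.sum_singleton]
      have hinj' : Set.InjOn g ↑(s.erase a \ (∅ : Finset α)) := by
        refine hinj.mono ?_
        rw [Finset.sdiff_empty]
        exact Finset.coe_subset.2 (Finset.erase_subset a s)
      have h1 : ∀ x ∈ (∅ : Finset α), g x = g a := by simp
      rw [if_pos h1, if_pos hinj']
      simp
    · rw [if_neg hinj]
      rcases F.eq_empty_or_nonempty with hFe | hFne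
      · -- fiber empty: injectivity on erase implies injectivity on s, contradiction route
        rw [hFe, Finset.powerset_empty, Finset.sum_singleton]
        have : ¬ Set.InjOn g ↑(s.erase a \ (∅ : Finset α)) := by
          rw [Finset.sdiff_empty]
          intro hinj'
          refine hinj ?_
          intro x hx y hy hxy
          by_cases hxa : x = a
          · by_cases hya : y = a
            · rw [hxa, hya]
            · exfalso
              have hyF : y ∈ F := Finset.mem_filter.2
                ⟨Finset.mem_erase.2 ⟨hya, Finset.mem_coe.1 hy⟩, by rw [← hxy, hxa]⟩
              rw [hFe] at hyF
              exact absurd hyF (Finset.notMem_empty y)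
          · by_cases hya : y = a
            · exfalso
              have hxF : x ∈ F := Finset.mem_filter.2
                ⟨Finset.mem_erase.2 ⟨hxa, Finset.mem_coe.1 hx⟩, by rw [hxy, hya]⟩
              rw [hFe] at hxF
              exact absurd hxF (Finset.notMem_empty x)
            · exact hinj' (Finset.mem_coe.2 (Finset.mem_erase.2 ⟨hxa, Finset.mem_coe.1 hx⟩))
                (Finset.mem_coe.2 (Finset.mem_erase.2 ⟨hya, Finset.mem_coe.1 hy⟩)) hxy
        rw [if_neg this, mul_zero]
      · -- fiber nonempty: the alternating sum vanishes
        have hterm : ∀ t ∈ F.powerset,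
            (if ∀ x ∈ t, g x = g a then ((-1 : ℂ) ^ t.card * (Nat.factorial t.card : ℂ))
              else 0) * (if Set.InjOn g ↑(s.erase a \ t) then 1 else 0)
            = (if Set.InjOn g ↑(s.erase a \ F) then 1 else 0) *
              (if (F \ t).card ≤ 1 then ((-1 : ℂ) ^ t.card * (Nat.factorial t.card : ℂ))
                else 0) := by
          intro t htp
          have htF : t ⊆ F := Finset.mem_powerset.1 htp
          have hc : ∀ x ∈ t, g x = g a := fun x hx => (Finset.mem_filter.1 (htF hx)).2
          rw [if_pos hc]
          have hiff : Set.InjOn g ↑(s.erase a \ t) ↔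
              (Set.InjOn g ↑(s.erase a \ F) ∧ (F \ t).card ≤ 1) := by
            constructor
            · intro h
              constructor
              · exact h.mono (Finset.coe_subset.2
                  (Finset.sdiff_subset_sdiff le_rfl htF))
              · rw [Finset.card_le_one]
                intro x hx y hy
                rw [Finset.mem_sdiff] at hx hy
                have hx' : x ∈ s.erase a \ t := Finset.mem_sdiff.2 ⟨hFsub hx.1, hx.2⟩
                have hy' : y ∈ s.erase a \ t := Finset.mem_sdiff.2 ⟨hFsub hy.1, hy.2⟩
                refine h (Finset.mem_coe.2 hx') (Finset.mem_coe.2 hy') ?_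
                rw [(Finset.mem_filter.1 hx.1).2, (Finset.mem_filter.1 hy.1).2]
            · rintro ⟨hI, hcard⟩
              intro x hx y hy hxy
              rw [Finset.mem_coe, Finset.mem_sdiff] at hx hy
              by_cases hxF : x ∈ F <;> by_cases hyF : y ∈ F
              · exact Finset.card_le_one.1 hcard x
                  (Finset.mem_sdiff.2 ⟨hxF, hx.2⟩) y (Finset.mem_sdiff.2 ⟨hyF, hy.2⟩)
              · exfalso
                refine hyF (Finset.mem_filter.2 ⟨hy.1, ?_⟩)
                rw [← hxy, (Finset.mem_filter.1 hxF).2]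
              · exfalso
                refine hxF (Finset.mem_filter.2 ⟨hx.1, ?_⟩)
                rw [hxy, (Finset.mem_filter.1 hyF).2]
              · exact hI (Finset.mem_coe.2 (Finset.mem_sdiff.2 ⟨hx.1, hxF⟩))
                  (Finset.mem_coe.2 (Finset.mem_sdiff.2 ⟨hy.1, hyF⟩)) hxy
          simp only [hiff]
          rcases Classical.em (Set.InjOn g ↑(s.erase a \ F)) with h1 | h1
          · rcases Classical.em ((F \ t).card ≤ 1) with h2 | h2
            · rw [if_pos (show _ ∧ _ from ⟨h1, h2⟩), if_pos h1, if_pos h2, one_mul, mul_one]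
            · rw [if_neg (fun h : _ ∧ _ => h2 h.2), if_pos h1, if_neg h2, mul_zero, one_mul]
          · rw [if_neg (fun h : _ ∧ _ => h1 h.1), if_neg h1, mul_zero, zero_mul]
        rw [Finset.sum_congr rfl hterm, ← Finset.mul_sum]
        have hT : ∑ t ∈ F.powerset,
            (if (F \ t).card ≤ 1 then ((-1 : ℂ) ^ t.card * (Nat.factorial t.card : ℂ))
              else 0) = 0 := by
          rw [← Finset.sum_filter]
          have hset : F.powerset.filter (fun t => (F \ t).card ≤ 1)
              = insert F (F.image (fun x => F.erase x)) := by
            ext t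
            rw [Finset.mem_filter, Finset.mem_insert, Finset.mem_image, Finset.mem_powerset]
            constructor
            · rintro ⟨htF, hcard⟩
              rcases Nat.le_one_iff_eq_zero_or_eq_one.1 hcard with h | h
              · left
                have : F \ t = ∅ := Finset.card_eq_zero.1 h
                exact Finset.Subset.antisymm htF
                  (fun x hx => by_contra fun hxt =>
                    (Finset.eq_empty_iff_forall_notMem.1 this x)
                      (Finset.mem_sdiff.2 ⟨hx, hxt⟩))
              · right
                obtain ⟨x, hx⟩ := Finset.card_eq_one.1 h
                have hxF : x ∈ F := (Finset.mem_sdiff.1 (hx ▸ Finset.mem_singleton_self x)).1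
                refine ⟨x, hxF, ?_⟩
                ext y
                rw [Finset.mem_erase]
                constructor
                · rintro ⟨hyx, hyF⟩
                  by_contra hyt
                  have hmem : y ∈ F \ t := Finset.mem_sdiff.2 ⟨hyF, hyt⟩
                  rw [hx, Finset.mem_singleton] at hmem
                  exact hyx hmem
                · rintro hyt
                  refine ⟨?_, htF hyt⟩
                  intro hyx
                  exact (Finset.mem_sdiff.1 (hx ▸ (hyx ▸ Finset.mem_singleton_self y :
                    y ∈ ({x} : Finset α)))).2 hyt
            · rintro (rfl | ⟨x, hxF, rfl⟩)
              · simp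
              · refine ⟨Finset.erase_subset x F, ?_⟩
                rw [Finset.sdiff_erase_self hxF]
                simp
          rw [hset]
          have hm : 1 ≤ F.card := Finset.card_pos.2 hFne
          have hFnotmem : F ∉ F.image (fun x => F.erase x) := by
            intro hmem
            obtain ⟨x, hxF, heq⟩ := Finset.mem_image.1 hmem
            have : (F.erase x).card = F.card - 1 := Finset.card_erase_of_mem hxF
            rw [heq] at this
            omega
          rw [Finset.sum_insert hFnotmem]
          have hinjerase : Set.InjOn (fun x => F.erase x) ↑F := by
            intro x hx y hy hxy
            have hxy' : F.erase x = F.erase y := hxy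
            by_contra hne
            have : x ∈ F.erase y := Finset.mem_erase.2 ⟨hne, hx⟩
            rw [← hxy'] at this
            exact (Finset.notMem_erase x F) this
          rw [Finset.sum_image (fun x hx y hy h => hinjerase hx hy h)]
          have hcards : ∀ x ∈ F, (F.erase x).card = F.card - 1 := fun x hx =>
            Finset.card_erase_of_mem hx
          rw [Finset.sum_congr rfl (fun x hx => by rw [hcards x hx])]
          rw [Finset.sum_const, nsmul_eq_mul]
          obtain ⟨k, hk⟩ : ∃ k, F.card = k + 1 := ⟨F.card - 1, by omega⟩
          rw [hk]
          simp only [Nat.add_sub_cancel, pow_succ, Nat.factorial_succ]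
          push_cast
          ring
        rw [hT, mul_zero]

lemma expand {α : Type*} [Fintype α] [DecidableEq α] {β : Type*} [Fintype β] [DecidableEq β]
    (r : β → ℂ) (π : Finpartition (Finset.univ : Finset α)) :
    ∏ V ∈ π.parts, (∑ i : β, r i ^ V.card) =
      ∑ g : α → β, if Mono g π then ∏ x : α, r (g x) else 0 := by
  rw [Finset.prod_sum]
  rw [← Finset.sum_filter]
  have hpcongr : ∀ (p : ∀ a ∈ π.parts, β) (W W' : Finset α) (h : W = W')
      (hW : W ∈ π.parts) (hW' : W' ∈ π.parts), p W hW = p W' hW' := by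
    rintro p W W' rfl hW hW'
    rfl
  refine Finset.sum_bij'
    (fun p hp => fun x => p (π.part x) (π.part_mem.2 (Finset.mem_univ x)))
    (fun g hg => fun V hV => g ((π.nonempty_of_mem_parts hV).choose)) ?_ ?_ ?_ ?_ ?_
  · intro p hp
    rw [Finset.mem_filter]
    refine ⟨Finset.mem_univ _, ?_⟩
    intro V hV x hx y hy
    dsimp only
    rw [hpcongr p _ _ (π.part_eq_of_mem hV hx) (π.part_mem.2 (Finset.mem_univ x)) hV,
      hpcongr p _ _ (π.part_eq_of_mem hV hy) (π.part_mem.2 (Finset.mem_univ y)) hV]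
  · intro g hg
    rw [Finset.mem_pi]
    intro V hV
    exact Finset.mem_univ _
  · intro p hp
    funext V hV
    exact hpcongr p _ _ (π.part_eq_of_mem hV (π.nonempty_of_mem_parts hV).choose_spec) _ hV
  · intro g hg
    have hmono : Mono g π := (Finset.mem_filter.1 hg).2
    funext x
    exact hmono (π.part x) (π.part_mem.2 (Finset.mem_univ x)) _
      (π.nonempty_of_mem_parts (π.part_mem.2 (Finset.mem_univ x))).choose_spec
      x (π.mem_part (Finset.mem_univ x))
  · intro p hp
    have hdisj : (↑π.parts.attach : Set {x // x ∈ π.parts}).PairwiseDisjoint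
        (fun V => V.1) := by
      intro u hu v hv huv
      exact π.disjoint u.2 v.2 (fun h => huv (Subtype.ext h))
    have hunion : π.parts.attach.biUnion (fun V => V.1) = (Finset.univ : Finset α) := by
      ext x
      simp only [Finset.mem_biUnion, Finset.mem_univ, iff_true]
      obtain ⟨V, hV, hx⟩ := π.exists_mem (Finset.mem_univ x)
      exact ⟨⟨V, hV⟩, Finset.mem_attach _ _, hx⟩
    have hsplit : ∏ V ∈ π.parts.attach, ∏ x ∈ V.1,
          r (p (π.part x) (π.part_mem.2 (Finset.mem_univ x)))
        = ∏ x : α, r (p (π.part x) (π.part_mem.2 (Finset.mem_univ x))) := by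
      rw [← Finset.prod_biUnion hdisj]
      exact Finset.prod_congr hunion (fun _ _ => rfl)
    dsimp only
    rw [← hsplit]
    refine Finset.prod_congr rfl ?_
    intro V _
    have hconst : ∀ x ∈ V.1, r (p (π.part x) (π.part_mem.2 (Finset.mem_univ x))) = r (p V.1 V.2) :=
      fun x hx => by rw [hpcongr p _ _ (π.part_eq_of_mem V.2 hx) _ V.2]
    rw [Finset.prod_congr rfl hconst, Finset.prod_const]

lemma inj_sum {n d : ℕ} (r : Fin d → ℂ) :
    ∑ g : Fin n → Fin d, (if Function.Injective g then ∏ x : Fin n, r (g x) else 0)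
      = (Nat.factorial n : ℂ) *
        ∑ t ∈ Finset.powersetCard n (Finset.univ : Finset (Fin d)), ∏ i ∈ t, r i := by
  classical
  rw [← Finset.sum_filter]
  rw [← Finset.sum_fiberwise_of_maps_to (g := fun g : Fin n → Fin d =>
    Finset.image g Finset.univ) (t := Finset.powersetCard n (Finset.univ : Finset (Fin d)))
    (fun g hg => by
      rw [Finset.mem_powersetCard]
      refine ⟨Finset.subset_univ _, ?_⟩
      rw [Finset.card_image_of_injective _ (Finset.mem_filter.1 hg).2, Finset.card_univ,
        Fintype.card_fin])]
  rw [Finset.mul_sum]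
  refine Finset.sum_congr rfl ?_
  intro t ht
  obtain ⟨-, htc⟩ := Finset.mem_powersetCard.1 ht
  have hval : ∀ g ∈ (Finset.univ.filter (fun g : Fin n → Fin d => Function.Injective g)).filter
      (fun g => Finset.image g Finset.univ = t),
      (∏ x : Fin n, r (g x)) = ∏ i ∈ t, r i := by
    intro g hg
    rw [Finset.mem_filter] at hg
    obtain ⟨hg1, hg2⟩ := hg
    have hinj : Function.Injective g := (Finset.mem_filter.1 hg1).2
    rw [← hg2, Finset.prod_image (fun x _ y _ h => hinj h)]
  rw [Finset.sum_congr rfl hval, Finset.sum_const, nsmul_eq_mul]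
  congr 1
  have hcard : ((Finset.univ.filter (fun g : Fin n → Fin d => Function.Injective g)).filter
      (fun g => Finset.image g Finset.univ = t)).card = Nat.factorial n := by
    rw [← Fintype.card_coe]
    have e : ((Finset.univ.filter (fun g : Fin n → Fin d => Function.Injective g)).filter
        (fun g => Finset.image g Finset.univ = t)) ≃ (Fin n ↪ {x // x ∈ t}) := by
      refine ⟨fun gh => ⟨fun x => ⟨gh.1 x, ?_⟩, fun x y h => ?_⟩,
        fun f => ⟨fun x => (f x).1, ?_⟩, fun gh => ?_, fun f => ?_⟩
      · have hg := gh.2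
        rw [Finset.mem_filter] at hg
        have hmem : (↑gh : Fin n → Fin d) x ∈ Finset.image (↑gh : Fin n → Fin d) Finset.univ :=
          Finset.mem_image_of_mem _ (Finset.mem_univ x)
        rwa [hg.2] at hmem
      · have hg := gh.2
        rw [Finset.mem_filter, Finset.mem_filter] at hg
        exact hg.1.2 (congrArg Subtype.val h)
      · have hinj : Function.Injective (fun x => ((f x).1 : Fin d)) :=
          fun x y h => f.injective (Subtype.ext h)
        rw [Finset.mem_filter, Finset.mem_filter]
        refine ⟨⟨Finset.mem_univ _, hinj⟩, ?_⟩
        refine Finset.eq_of_subset_of_card_le (fun i hi => ?_) ?_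
        · obtain ⟨x, -, rfl⟩ := Finset.mem_image.1 hi
          exact (f x).2
        · rw [Finset.card_image_of_injective _ hinj, Finset.card_univ, Fintype.card_fin, htc]
      · exact Subtype.ext rfl
      · exact DFunLike.ext _ _ (fun x => Subtype.ext rfl)
    rw [Fintype.card_congr e, Fintype.card_embedding_eq, Fintype.card_coe, htc,
      Fintype.card_fin, Nat.descFactorial_self]
  rw [hcard]

end CMF

/-- **Moment–coefficient formula** (Lemma 4.1, first half): for a monic polynomial `p`
of degree `d` with roots `r_1, …, r_d` (counted with multiplicity), coefficients `a^p_i`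
and moments `m^p_n`, for every `1 ≤ n ≤ d`,
`a^p_n = (1/n!) Σ_{π ∈ P(n)} d^{|π|} μ(0_n, π) m^p_π`. -/
theorem coefficient_moment_formula (d : ℕ) (r : Fin d → ℂ) (p : Polynomial ℂ)
    (hp : p = ∏ i, (X - C (r i))) (n : ℕ) (hn1 : 1 ≤ n) (hnd : n ≤ d) :
    coeffA d p n =
      (1 / (Nat.factorial n : ℂ)) *
        ∑ π : SetPartition n,
          (d : ℂ) ^ π.parts.card * mu0 n π * ∏ V ∈ π.parts, momentOf d r V.card := by
  have hd1 : 1 ≤ d := le_trans hn1 hnd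
  have hd0 : (d : ℂ) ≠ 0 := Nat.cast_ne_zero.2 (by omega)
  have hlhs : coeffA d p n = ∑ t ∈ Finset.powersetCard n (Finset.univ : Finset (Fin d)),
      ∏ i ∈ t, r i := by
    rw [coeffA, if_pos hnd, hp]
    have hmul : (∏ i : Fin d, (X - C (r i)))
        = ((Finset.univ.val.map r).map (fun t => X - C t)).prod := by
      rw [Finset.prod_eq_multiset_prod, Multiset.map_map]
      rfl
    rw [hmul]
    have hcard : Multiset.card (Finset.univ.val.map r) = d := by
      rw [Multiset.card_map]
      simp
    rw [Multiset.prod_X_sub_C_coeff _ (by rw [hcard]; omega)]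
    rw [hcard]
    have h2 : d - (d - n) = n := by omega
    rw [h2, Finset.esymm_map_val]
    rw [← mul_assoc, ← mul_pow, neg_one_mul, neg_neg, one_pow, one_mul]
  have hrhs : ∀ π : SetPartition n,
      (d : ℂ) ^ π.parts.card * mu0 n π * ∏ V ∈ π.parts, momentOf d r V.card
        = ∑ g : Fin n → Fin d,
            (if CMF.Mono g π then CMF.muW π * ∏ x : Fin n, r (g x) else 0) := by
    intro π
    have h1 : (d : ℂ) ^ π.parts.card * ∏ V ∈ π.parts, momentOf d r V.card
        = ∏ V ∈ π.parts, (∑ i : Fin d, r i ^ V.card) := by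
      unfold momentOf
      rw [Finset.prod_div_distrib, Finset.prod_const]
      rw [mul_div_cancel₀]
      exact pow_ne_zero _ hd0
    have h2 : mu0 n π = CMF.muW π := by
      unfold mu0 CMF.muW
      congr 2
      rw [Finset.card_univ, Fintype.card_fin]
    calc (d : ℂ) ^ π.parts.card * mu0 n π * ∏ V ∈ π.parts, momentOf d r V.card
        = mu0 n π * ((d : ℂ) ^ π.parts.card * ∏ V ∈ π.parts, momentOf d r V.card) := by ring
      _ = CMF.muW π * ∏ V ∈ π.parts, (∑ i : Fin d, r i ^ V.card) := by rw [h1, h2]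
      _ = CMF.muW π * ∑ g : Fin n → Fin d,
            (if CMF.Mono g π then ∏ x : Fin n, r (g x) else 0) := by rw [CMF.expand r π]
      _ = ∑ g : Fin n → Fin d,
            (if CMF.Mono g π then CMF.muW π * ∏ x : Fin n, r (g x) else 0) := by
          rw [Finset.mul_sum]
          refine Finset.sum_congr rfl fun g _ => ?_
          split <;> simp
  rw [hlhs, Finset.sum_congr rfl (fun π _ => hrhs π), Finset.sum_comm]
  have hswap : ∀ g : Fin n → Fin d,
      (∑ π : SetPartition n, if CMF.Mono g π then CMF.muW π * ∏ x : Fin n, r (g x) else 0)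
        = (if Function.Injective g then ∏ x : Fin n, r (g x) else 0) := by
    intro g
    have hfac : ∀ π : SetPartition n,
        (if CMF.Mono g π then CMF.muW π * ∏ x : Fin n, r (g x) else 0)
          = (if CMF.Mono g π then CMF.muW π else 0) * ∏ x : Fin n, r (g x) := fun π => by
      split <;> simp
    rw [Finset.sum_congr rfl (fun π _ => hfac π), ← Finset.sum_mul, CMF.key]
    simp only [Finset.coe_univ, Set.injOn_univ]
    split <;> simp
  rw [Finset.sum_congr rfl (fun g _ => hswap g), CMF.inj_sum r]
  rw [← mul_assoc, one_div, inv_mul_cancel₀ (Nat.cast_ne_zero.2 n.factorial_ne_zero), one_mul]
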